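/- If G is a graph on n vertices such that every set of k vertices contains a clique on t vertices, and S is an independent set in G, then the induced subgraph G - S has the property that every set of k - |S| vertices contains a clique on t - 1 vertices. -/

import Mathlib

open SimpleGraph

/-- `G` is a graph in which every set of `k` vertices contains a clique on `t` vertices. -/
def CliqueInEveryK {V : Type*} [DecidableEq V] (G : SimpleGraph V) (k t : ℕ) : Prop :=
  ∀ s : Finset V, s.card = k → ∃ c ⊆ s, G.IsNClique t c

/-- If `G` is an `(n,k,t)`-graph and `S` is an independent set, then `G - S` is an
`(n - |S|, k - |S|, t - 1)`-graph. -/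
theorem stmt_0 {V : Type*} [Fintype V] [DecidableEq V] {n k t : ℕ}
    (hn : Fintype.card V = n) (hkn : k ≤ n) (htk : t ≤ k) (ht : 1 ≤ t)
    (G : SimpleGraph V) (hG : CliqueInEveryK G k t)
    (S : Finset V) (hS : ∀ u ∈ S, ∀ v ∈ S, u ≠ v → ¬ G.Adj u v) (hSk : S.card ≤ k) :
    CliqueInEveryK (G.induce ((↑S : Set V)ᶜ)) (k - S.card) (t - 1) := by
  intro s hs
  -- image of s in V
  set s₀ : Finset V := s.image Subtype.val with hs₀
  have hs₀card : s₀.card = k - S.card := by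
    rw [hs₀, Finset.card_image_of_injective _ Subtype.val_injective, hs]
  have hdisj : Disjoint s₀ S := by
    rw [Finset.disjoint_left]
    rintro a ha haS
    rw [hs₀, Finset.mem_image] at ha
    obtain ⟨⟨x, hx⟩, _, rfl⟩ := ha
    exact hx (by simpa using haS)
  have hT : (s₀ ∪ S).card = k := by
    rw [Finset.card_union_of_disjoint hdisj, hs₀card, Nat.sub_add_cancel hSk]
  obtain ⟨c, hcsub, hclique⟩ := hG (s₀ ∪ S) hT
  -- at most one vertex of c lies in S
  have hcS : (c ∩ S).card ≤ 1 := by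
    rw [Finset.card_le_one]
    intro u hu v hv
    by_contra hne
    exact hS u (Finset.mem_of_mem_inter_right hu) v (Finset.mem_of_mem_inter_right hv) hne
      (hclique.1 (by simpa using Finset.mem_of_mem_inter_left hu)
        (by simpa using Finset.mem_of_mem_inter_left hv) hne)
  have hcd : t - 1 ≤ (c \ S).card := by
    have h1 := Finset.card_sdiff_add_card_inter c S
    have h2 := hclique.2
    omega
  obtain ⟨d, hdsub, hdcard⟩ := Finset.exists_subset_card_eq hcd
  have hdS : ∀ x ∈ d, x ∉ S := fun x hx => (Finset.mem_sdiff.mp (hdsub hx)).2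
  have hdc : d ⊆ c := hdsub.trans (Finset.sdiff_subset)
  -- pull back to the subtype
  refine ⟨d.subtype (fun x => x ∈ ((↑S : Set V)ᶜ : Set V)), ?_, ?_, ?_⟩
  · intro x hx
    rw [Finset.mem_subtype] at hx
    have : (x : V) ∈ s₀ := by
      have hc := hdc hx
      rcases Finset.mem_union.mp (hcsub hc) with h | h
      · exact h
      · exact absurd h (hdS _ hx)
    rw [hs₀, Finset.mem_image] at this
    obtain ⟨y, hy, hyx⟩ := this
    rwa [show x = y from Subtype.ext hyx.symm]
  · intro x hx y hy hxy
    simp only [Finset.mem_coe, Finset.mem_subtype] at hx hy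
    exact hclique.1 (by simpa using hdc hx) (by simpa using hdc hy)
      (fun h => hxy (Subtype.ext h))
  · rw [Finset.card_subtype, hdcard.symm]
    congr 1
    apply Finset.filter_true_of_mem
    intro x hx
    simpa using hdS x hx
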